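/- A factor map between minimal topological dynamical systems is semiopen: if π : (X,T) → (Y,S) is a continuous surjection between compact metric spaces with π ∘ T = S ∘ π, and both systems are minimal, then for every nonempty open U ⊆ X the image π(U) has nonempty interior in Y. -/

import Mathlib

/-- A system `(α, T)` (with `T` an invertible transformation) is minimal if every
(two-sided) orbit is dense. -/
def IsMinimalSystem {α : Type*} [TopologicalSpace α] (T : Equiv.Perm α) : Prop :=
  ∀ x : α, Dense (Set.range fun n : ℤ => (T ^ n) x)

lemma zpow_continuous_aux {β : Type*} [TopologicalSpace β] (S : Equiv.Perm β)
    (hS : Continuous S) (hS' : Continuous S.symm) : ∀ n : ℤ, Continuous ⇑(S ^ n) := by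
  intro n
  induction n using Int.induction_on with
  | zero => simpa using continuous_id
  | succ k ih =>
    rw [zpow_add_one]
    have : ⇑(S ^ (k : ℤ) * S) = ⇑(S ^ (k : ℤ)) ∘ ⇑S := by
      ext a; simp [Equiv.Perm.mul_apply]
    rw [this]; exact ih.comp hS
  | pred k ih =>
    have hk : (-(k : ℤ) - 1) = -k + -1 := by ring
    rw [hk, zpow_add]
    have : ⇑(S ^ (-(k : ℤ)) * S ^ (-1 : ℤ)) = ⇑(S ^ (-(k : ℤ))) ∘ ⇑S.symm := by
      ext a; simp [Equiv.Perm.mul_apply, Equiv.Perm.inv_def]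
    rw [this]; exact ih.comp hS'

theorem stmt_5 {α β : Type*} [MetricSpace α] [CompactSpace α]
    [MetricSpace β] [CompactSpace β]
    (T : Equiv.Perm α) (hT : Continuous T) (hT' : Continuous T.symm)
    (S : Equiv.Perm β) (hS : Continuous S) (hS' : Continuous S.symm)
    (hmT : IsMinimalSystem T) (hmS : IsMinimalSystem S)
    (π : α → β) (hπc : Continuous π) (hπs : Function.Surjective π)
    (hπe : π ∘ T = S ∘ π) :
    ∀ U : Set α, IsOpen U → U.Nonempty → (interior (π '' U)).Nonempty := by
  intro U hU ⟨x, hxU⟩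
  haveI : Nonempty α := ⟨x⟩
  haveI : Nonempty β := ⟨π x⟩
  -- equivariance for all integer powers
  have key : ∀ (n : ℤ) (a : α), π ((T ^ n) a) = (S ^ n) (π a) := by
    intro n
    induction n using Int.induction_on with
    | zero => simp
    | succ k ih =>
      intro a
      rw [zpow_add_one, zpow_add_one, Equiv.Perm.mul_apply, Equiv.Perm.mul_apply,
        ih (T a)]
      congr 1
      exact congrFun hπe a
    | pred k ih =>
      intro a
      rw [zpow_sub_one, zpow_sub_one, Equiv.Perm.mul_apply, Equiv.Perm.mul_apply,
        ih (T⁻¹ a)]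
      congr 1
      have := congrFun hπe (T⁻¹ a)
      simp only [Function.comp_apply] at this
      have h2 : T (T⁻¹ a) = a := by simp [Equiv.Perm.inv_def]
      rw [h2] at this
      rw [this]
      simp [Equiv.Perm.inv_def]
  -- pick a closed ball inside U
  obtain ⟨ε, hε, hball⟩ := Metric.isOpen_iff.mp hU x hxU
  set B : Set α := Metric.closedBall x (ε / 2) with hB
  have hBU : B ⊆ U := (Metric.closedBall_subset_ball (by linarith)).trans hball
  have hBc : IsCompact B := (Metric.isClosed_closedBall).isCompact
  -- the closed sets covering β
  set f : ℤ → Set β := fun n => ⇑(S ^ n) '' (π '' B) with hf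
  have hfc : ∀ n, IsClosed (f n) := by
    intro n
    exact (((hBc.image hπc).image (zpow_continuous_aux S hS hS' n)).isClosed)
  have hcov : ⋃ n, f n = Set.univ := by
    apply Set.eq_univ_of_forall
    intro y
    obtain ⟨a, rfl⟩ := hπs y
    obtain ⟨z, ⟨n, rfl⟩, hz⟩ := (hmT a).exists_mem_open (Metric.isOpen_ball : IsOpen (Metric.ball x (ε/2)))
      ⟨x, Metric.mem_ball_self (by positivity)⟩
    refine Set.mem_iUnion.mpr ⟨-n, ?_⟩
    refine ⟨π ((T ^ n) a), ⟨(T ^ n) a, Metric.ball_subset_closedBall hz, rfl⟩, ?_⟩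
    rw [key n a]
    have : ((S ^ (-n)) ((S ^ n) (π a))) = ((S ^ (-n)) * (S ^ n)) (π a) := rfl
    rw [this, ← zpow_add]
    simp
  obtain ⟨n, hn⟩ := nonempty_interior_of_iUnion_of_closed hfc hcov
  -- S ^ n is a homeomorphism
  let e : β ≃ₜ β := ⟨(S ^ n : Equiv.Perm β), zpow_continuous_aux S hS hS' n, by
    show Continuous ⇑(S ^ n : Equiv.Perm β).symm
    have : ⇑(S ^ n : Equiv.Perm β).symm = ⇑(S ^ (-n) : Equiv.Perm β) := by
      rw [← Equiv.Perm.inv_def, ← zpow_neg]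
    rw [this]; exact zpow_continuous_aux S hS hS' (-n)⟩
  have himg : (interior (π '' B)).Nonempty := by
    have h1 : e '' interior (π '' B) = interior (e '' (π '' B)) := e.image_interior _
    have h2 : e '' (π '' B) = f n := rfl
    rw [h2] at h1
    have : (e '' interior (π '' B)).Nonempty := h1 ▸ hn
    exact this.of_image
  exact himg.mono (interior_mono (Set.image_mono (f := π) hBU))
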